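/- Let G be a finite abelian group. The set B_ρ(G), consisting of the identity together with all zero-sum sequences A over G with ρ(L(A)) = D(G)/2, is a submonoid of B(G) and is finitely generated. -/

import Mathlib

def IsMinZS {G : Type*} [AddCommGroup G] (U : Multiset G) : Prop :=
  U ≠ 0 ∧ U.sum = 0 ∧ ∀ V ≤ U, V ≠ 0 → V.sum = 0 → V = U

noncomputable def DavC (G : Type*) [AddCommGroup G] : ℕ :=
  sSup {n | ∃ U : Multiset G, IsMinZS U ∧ U.card = n}

def LSet {G : Type*} [AddCommGroup G] (A : Multiset G) : Set ℕ :=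
  {k | ∃ l : Multiset (Multiset G), l.card = k ∧ (∀ U ∈ l, IsMinZS U) ∧ l.sum = A}

noncomputable def rhoSet (L : Set ℕ) : ℚ := ((sSup L : ℕ) : ℚ) / ((sInf L : ℕ) : ℚ)

def IsIntervalSet (L : Set ℕ) : Prop := L.Nonempty ∧ L = Set.Icc (sInf L) (sSup L)

def Brho (G : Type*) [AddCommGroup G] : Set (Multiset G) :=
  {A | A.sum = 0 ∧ (A = 0 ∨ rhoSet (LSet A) = (DavC G : ℚ) / 2)}

set_option linter.unusedSectionVars false
set_option linter.unusedVariables false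

section A
variable {G : Type*} [AddCommGroup G]

lemma minZS_zero_singleton : IsMinZS ({0} : Multiset G) := by
  refine ⟨by simp, by simp, fun V hV hV0 _ => ?_⟩
  exact Multiset.eq_of_le_of_card_le hV (by
    rcases Multiset.exists_mem_of_ne_zero hV0 with ⟨a, ha⟩
    simpa using Nat.one_le_of_lt (Multiset.card_pos_iff_exists_mem.2 ⟨a, ha⟩))

lemma IsMinZS.ne_zero {U : Multiset G} (h : IsMinZS U) : U ≠ 0 := h.1

lemma IsMinZS.card_pos {U : Multiset G} (h : IsMinZS U) : 0 < U.card :=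
  Multiset.card_pos.2 h.1

lemma IsMinZS.eq_singleton_of_zero_mem {U : Multiset G} (h : IsMinZS U) (h0 : (0:G) ∈ U) :
    U = {0} :=
  (h.2.2 {0} (Multiset.singleton_le.2 h0) (by simp) (by simp)).symm

lemma IsMinZS.eq_singleton_of_card_one {U : Multiset G} (h : IsMinZS U) (hc : U.card = 1) :
    U = {0} := by
  rcases Multiset.card_eq_one.1 hc with ⟨a, rfl⟩
  have : a = 0 := by simpa using h.2.1
  simp [this]

lemma exists_atom_le {A : Multiset G} (hA : A ≠ 0) (hs : A.sum = 0) :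
    ∃ V ≤ A, IsMinZS V := by
  classical
  set s : Set ℕ := {k | ∃ V, V ≤ A ∧ V ≠ 0 ∧ V.sum = 0 ∧ V.card = k} with hsdef
  have hne : s.Nonempty := ⟨A.card, A, le_rfl, hA, hs, rfl⟩
  obtain ⟨V, hVA, hV0, hVs, hVc⟩ := Nat.sInf_mem hne
  refine ⟨V, hVA, hV0, hVs, fun W hWV hW0 hWs => ?_⟩
  have hWmem : W.card ∈ s := ⟨W, hWV.trans hVA, hW0, hWs, rfl⟩
  have := Nat.sInf_le hWmem
  exact Multiset.eq_of_le_of_card_le hWV (by omega)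

lemma exists_factorization (A : Multiset G) (hs : A.sum = 0) :
    ∃ l : Multiset (Multiset G), (∀ U ∈ l, IsMinZS U) ∧ l.sum = A := by
  classical
  suffices h : ∀ n (A : Multiset G), A.card ≤ n → A.sum = 0 →
      ∃ l : Multiset (Multiset G), (∀ U ∈ l, IsMinZS U) ∧ l.sum = A from
    h A.card A le_rfl hs
  intro n
  induction n with
  | zero =>
    intro A hc _
    have : A = 0 := by
      rw [← Multiset.card_eq_zero]; omega
    exact ⟨0, by simp, by simp [this]⟩
  | succ n ih =>
    intro A hc hs
    rcases eq_or_ne A 0 with rfl | hA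
    · exact ⟨0, by simp, by simp⟩
    · obtain ⟨V, hVA, hV⟩ := exists_atom_le hA hs
      have hadd : V + (A - V) = A := add_tsub_cancel_of_le hVA
      have hsum : (A - V).sum = 0 := by
        have h2 := congrArg Multiset.sum hadd
        rw [Multiset.sum_add, hV.2.1, zero_add] at h2
        exact h2.trans hs
      have hcard : (A - V).card ≤ n := by
        have h2 := congrArg Multiset.card hadd
        rw [Multiset.card_add] at h2
        have := hV.card_pos
        omega
      obtain ⟨l, hl, hlsum⟩ := ih (A - V) hcard hsum
      refine ⟨V ::ₘ l, ?_, ?_⟩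
      · intro U hU
        rcases Multiset.mem_cons.1 hU with rfl | h
        · exact hV
        · exact hl U h
      · rw [Multiset.sum_cons, hlsum, hadd]

lemma LSet_nonempty {A : Multiset G} (hs : A.sum = 0) : (LSet A).Nonempty := by
  obtain ⟨l, hl, hlsum⟩ := exists_factorization A hs
  exact ⟨l.card, l, rfl, hl, hlsum⟩

end A


section B
variable {G : Type*} [AddCommGroup G]

lemma IsMinZS.card_le_fintypeCard [Fintype G] {U : Multiset G} (h : IsMinZS U) :
    U.card ≤ Fintype.card G := by
  classical
  by_contra hlt
  push_neg at hlt
  set L := U.toList with hL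
  have hLlen : L.length = U.card := Multiset.length_toList U
  have hLU : (L : Multiset G) = U := Multiset.coe_toList U
  set k := L.length with hk
  have hcard : Fintype.card G < Fintype.card (Fin k) := by simp [hk, hLlen]; omega
  obtain ⟨i, j, hij, hfeq⟩ : ∃ i j : Fin k, i ≠ j ∧
      (L.take (i+1)).sum = (L.take (j+1)).sum := by
    obtain ⟨i, j, hij, h⟩ := Fintype.exists_ne_map_eq_of_card_lt
      (fun i : Fin k => (L.take (i+1)).sum) hcard
    exact ⟨i, j, hij, h⟩
  -- wlog i < j
  have main : ∀ i j : Fin k, (i:ℕ) < (j:ℕ) →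
      (L.take (i+1)).sum = (L.take (j+1)).sum → False := by
    intro i j hlt' heq
    set seg := (L.take (j+1)).drop (i+1) with hseg
    have h1 : List.take (i+1) (List.take (j+1) L) = List.take (i+1) L := by
      rw [List.take_take]
      congr 1
      omega
    have hsplit : L.take (j+1) = L.take (i+1) ++ seg := by
      rw [hseg, ← h1, List.take_append_drop]
    have hsegsum : seg.sum = 0 := by
      have h2 := congrArg List.sum hsplit
      rw [List.sum_append, ← heq, left_eq_add] at h2
      exact h2
    have hseglen : seg.length = j - i := by
      rw [hseg, List.length_drop, List.length_take]
      have := j.isLt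
      omega
    have hsegMle : (seg : Multiset G) ≤ U := by
      rw [← hLU, Multiset.coe_le]
      exact ((List.drop_suffix _ _).sublist.trans (List.take_prefix _ _).sublist).subperm
    have hsegne : (seg : Multiset G) ≠ 0 := by
      simp only [ne_eq, Multiset.coe_eq_zero]
      intro hnil
      rw [hnil] at hseglen
      simp at hseglen
      omega
    have := h.2.2 _ hsegMle hsegne (by simpa using hsegsum)
    have hcards := congrArg Multiset.card this
    rw [Multiset.coe_card, hseglen, ← hLU, Multiset.coe_card] at hcards
    have := i.isLt
    have := j.isLt
    omega
  rcases Ne.lt_or_gt hij with h | h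
  · exact main i j (by exact_mod_cast h) hfeq
  · exact main j i (by exact_mod_cast h) hfeq.symm

lemma bddAbove_minZS_set [Fintype G] :
    BddAbove {n | ∃ U : Multiset G, IsMinZS U ∧ U.card = n} :=
  ⟨Fintype.card G, fun _ ⟨_, hU, hc⟩ => hc ▸ hU.card_le_fintypeCard⟩

lemma IsMinZS.card_le_D [Fintype G] {U : Multiset G} (h : IsMinZS U) : U.card ≤ DavC G :=
  le_csSup bddAbove_minZS_set ⟨U, h, rfl⟩

lemma one_le_D (G : Type*) [AddCommGroup G] [Fintype G] : 1 ≤ DavC G :=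
  le_csSup bddAbove_minZS_set ⟨{0}, minZS_zero_singleton, rfl⟩

lemma exists_atom_card_D [Fintype G] : ∃ U : Multiset G, IsMinZS U ∧ U.card = DavC G := by
  have hne : {n | ∃ U : Multiset G, IsMinZS U ∧ U.card = n}.Nonempty :=
    ⟨1, {0}, minZS_zero_singleton, by simp⟩
  exact Nat.sSup_mem hne bddAbove_minZS_set

end B


section C
variable {G : Type*} [AddCommGroup G] [DecidableEq G]

lemma atom_count_zero {U : Multiset G} (h : IsMinZS U) :
    (U = {0} ∧ U.count 0 = 1 ∧ U.card = 1) ∨ (U.count 0 = 0 ∧ 2 ≤ U.card) := by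
  by_cases h0 : (0:G) ∈ U
  · left
    have := h.eq_singleton_of_zero_mem h0
    refine ⟨this, by simp [this], by simp [this]⟩
  · right
    refine ⟨Multiset.count_eq_zero.2 h0, ?_⟩
    have h1 := h.card_pos
    by_contra hc
    push_neg at hc
    have : U.card = 1 := by omega
    exact h0 (by rw [h.eq_singleton_of_card_one this]; simp)

lemma factor_ineq [Fintype G] {l : Multiset (Multiset G)} (hl : ∀ U ∈ l, IsMinZS U) :
    2 * l.card ≤ l.sum.card + l.sum.count 0 ∧
    l.sum.card + DavC G * l.sum.count 0 ≤ DavC G * l.card + l.sum.count 0 := by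
  induction l using Multiset.induction_on with
  | empty => simp
  | cons U l ih =>
    have hU : IsMinZS U := hl U (Multiset.mem_cons_self U l)
    have ih' := ih (fun V hV => hl V (Multiset.mem_cons_of_mem hV))
    have hUD := hU.card_le_D
    have hD := one_le_D G
    rcases atom_count_zero hU with ⟨_, hcnt, hcard⟩ | ⟨hcnt, hcard⟩ <;>
    · simp only [Multiset.sum_cons, Multiset.card_cons, Multiset.card_add,
        Multiset.count_add] at *
      constructor <;> nlinarith [ih'.1, ih'.2]

lemma factor_tight2 [Fintype G] {l : Multiset (Multiset G)} (hl : ∀ U ∈ l, IsMinZS U)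
    (ht : 2 * l.card = l.sum.card + l.sum.count 0) :
    ∀ U ∈ l, U = {0} ∨ U.card = 2 := by
  intro U hU
  rcases atom_count_zero (hl U hU) with ⟨h1, _, _⟩ | ⟨hcnt, hcard⟩
  · exact Or.inl h1
  · right
    by_contra hne
    have h3 : 3 ≤ U.card := by omega
    obtain ⟨l', rfl⟩ := Multiset.exists_cons_of_mem hU
    have ih := factor_ineq (fun V hV => hl V (Multiset.mem_cons_of_mem hV))
    simp only [Multiset.sum_cons, Multiset.card_cons, Multiset.card_add,
      Multiset.count_add] at *
    omega

lemma factor_tightD [Fintype G] {l : Multiset (Multiset G)} (hl : ∀ U ∈ l, IsMinZS U)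
    (ht : l.sum.card + DavC G * l.sum.count 0 = DavC G * l.card + l.sum.count 0) :
    ∀ U ∈ l, U = {0} ∨ U.card = DavC G := by
  intro U hU
  rcases atom_count_zero (hl U hU) with ⟨h1, _, _⟩ | ⟨hcnt, hcard⟩
  · exact Or.inl h1
  · right
    by_contra hne
    have h3 : U.card < DavC G := lt_of_le_of_ne (hl U hU).card_le_D hne
    obtain ⟨l', rfl⟩ := Multiset.exists_cons_of_mem hU
    have ih := factor_ineq (fun V hV => hl V (Multiset.mem_cons_of_mem hV))
    have hD := one_le_D G
    simp only [Multiset.sum_cons, Multiset.card_cons, Multiset.card_add,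
      Multiset.count_add] at *
    nlinarith [ih.1, ih.2]

end C


section D
variable {G : Type*} [AddCommGroup G] [DecidableEq G] [Fintype G]

lemma sum_card_eq (l : Multiset (Multiset G)) :
    l.sum.card = (l.map Multiset.card).sum := by
  induction l using Multiset.induction_on with
  | empty => simp
  | cons U l ih => simp [ih]

lemma sum_sum_eq (l : Multiset (Multiset G)) :
    l.sum.sum = (l.map Multiset.sum).sum := by
  induction l using Multiset.induction_on with
  | empty => simp
  | cons U l ih => simp [ih]

lemma mem_sum_exists {a : G} {l : Multiset (Multiset G)} (h : a ∈ l.sum) :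
    ∃ U ∈ l, a ∈ U := by
  induction l using Multiset.induction_on with
  | empty => simp at h
  | cons U l ih =>
    rw [Multiset.sum_cons, Multiset.mem_add] at h
    rcases h with h | h
    · exact ⟨U, Multiset.mem_cons_self U l, h⟩
    · obtain ⟨V, hV, ha⟩ := ih h
      exact ⟨V, Multiset.mem_cons_of_mem hV, ha⟩

lemma mem_LSet_bounds {A : Multiset G} {k : ℕ} (hk : k ∈ LSet A) :
    2 * k ≤ A.card + A.count 0 ∧
    A.card + DavC G * A.count 0 ≤ DavC G * k + A.count 0 := by
  obtain ⟨l, hcard, hl, hsum⟩ := hk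
  have := factor_ineq hl
  rw [hsum, hcard] at this
  exact this

lemma mem_LSet_pos {A : Multiset G} (hA : A ≠ 0) {k : ℕ} (hk : k ∈ LSet A) : 1 ≤ k := by
  obtain ⟨l, hcard, hl, hsum⟩ := hk
  rcases Nat.eq_zero_or_pos k with rfl | h
  · rw [Multiset.card_eq_zero] at hcard
    rw [hcard] at hsum
    exact absurd hsum.symm hA
  · exact h

lemma LSet_bddAbove (A : Multiset G) : BddAbove (LSet A) := by
  refine ⟨A.card, fun k hk => ?_⟩
  have h1 := (mem_LSet_bounds hk).1
  have h2 : A.count 0 ≤ A.card := Multiset.count_le_card 0 A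
  omega

lemma sSup_LSet_mem {A : Multiset G} (hs : A.sum = 0) : sSup (LSet A) ∈ LSet A :=
  Nat.sSup_mem (LSet_nonempty hs) (LSet_bddAbove A)

lemma sInf_LSet_mem {A : Multiset G} (hs : A.sum = 0) : sInf (LSet A) ∈ LSet A :=
  Nat.sInf_mem (LSet_nonempty hs)

lemma rho_eq_iff {A : Multiset G} (hA : A ≠ 0) (hs : A.sum = 0) :
    rhoSet (LSet A) = (DavC G : ℚ) / 2 ↔
      2 * sSup (LSet A) = DavC G * sInf (LSet A) := by
  have hm : 1 ≤ sInf (LSet A) := mem_LSet_pos hA (sInf_LSet_mem hs)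
  rw [rhoSet, div_eq_div_iff (by positivity) (by norm_num)]
  rw [mul_comm ((sSup (LSet A) : ℕ) : ℚ) 2]
  constructor
  · intro h
    exact_mod_cast h
  · intro h
    exact_mod_cast h

end D


def MnSet (G : Type*) [AddCommGroup G] (n : ℕ) : Set (Multiset G) :=
  {A | ∃ l : Multiset (Multiset G), (∀ U ∈ l, IsMinZS U ∧ U.card = n) ∧ l.sum = A}

section E
variable {G : Type*} [AddCommGroup G] [DecidableEq G] [Fintype G]

lemma mem_sum_of_mem {a : G} {U : Multiset G} {l : Multiset (Multiset G)}
    (hU : U ∈ l) (ha : a ∈ U) : a ∈ l.sum := by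
  obtain ⟨l', rfl⟩ := Multiset.exists_cons_of_mem hU
  rw [Multiset.sum_cons, Multiset.mem_add]
  exact Or.inl ha

lemma sum_of_factorization {l : Multiset (Multiset G)} (hl : ∀ U ∈ l, IsMinZS U) :
    l.sum.sum = 0 := by
  rw [sum_sum_eq]
  apply Multiset.sum_eq_zero
  intro x hx
  obtain ⟨U, hU, rfl⟩ := Multiset.mem_map.1 hx
  exact (hl U hU).2.1

lemma MnSet_sum_zero {n : ℕ} {A : Multiset G} (h : A ∈ MnSet G n) : A.sum = 0 := by
  obtain ⟨l, hl, rfl⟩ := h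
  exact sum_of_factorization (fun U hU => (hl U hU).1)

lemma MnSet_card {n : ℕ} {A : Multiset G} (h : A ∈ MnSet G n) :
    ∃ l : Multiset (Multiset G), (∀ U ∈ l, IsMinZS U ∧ U.card = n) ∧ l.sum = A ∧
      A.card = n * l.card := by
  obtain ⟨l, hl, rfl⟩ := h
  refine ⟨l, hl, rfl, ?_⟩
  rw [sum_card_eq]
  have : l.map Multiset.card = Multiset.replicate l.card n := by
    rw [Multiset.eq_replicate]
    refine ⟨by simp, ?_⟩
    intro b hb
    obtain ⟨U, hU, rfl⟩ := Multiset.mem_map.1 hb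
    exact (hl U hU).2
  rw [this, Multiset.sum_replicate, smul_eq_mul, mul_comm]

lemma MnSet_count_zero {n : ℕ} (hn : 2 ≤ n) {A : Multiset G} (h : A ∈ MnSet G n) :
    A.count 0 = 0 := by
  obtain ⟨l, hl, rfl⟩ := h
  rw [Multiset.count_eq_zero]
  intro h0
  obtain ⟨U, hU, h0U⟩ := mem_sum_exists h0
  have := ((hl U hU).1.eq_singleton_of_zero_mem h0U)
  have hc := (hl U hU).2
  rw [this] at hc
  simp at hc
  omega

/-- Backward: both factorizations give rho = D/2. -/
lemma char_backward (hD : 2 ≤ DavC G) {A : Multiset G} (hA : A ≠ 0)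
    (h2 : A ∈ MnSet G 2) (hd : A ∈ MnSet G (DavC G)) :
    rhoSet (LSet A) = (DavC G : ℚ) / 2 := by
  have hs : A.sum = 0 := MnSet_sum_zero h2
  have ht : A.count 0 = 0 := MnSet_count_zero le_rfl h2
  obtain ⟨l2, hl2, hl2s, hl2c⟩ := MnSet_card h2
  obtain ⟨ld, hld, hlds, hldc⟩ := MnSet_card hd
  have hk2 : l2.card ∈ LSet A := ⟨l2, rfl, fun U hU => (hl2 U hU).1, hl2s⟩
  have hkd : ld.card ∈ LSet A := ⟨ld, rfl, fun U hU => (hld U hU).1, hlds⟩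
  rw [rho_eq_iff hA hs]
  have hM1 : l2.card ≤ sSup (LSet A) := le_csSup (LSet_bddAbove A) hk2
  have hM2 : 2 * sSup (LSet A) ≤ A.card + A.count 0 :=
    (mem_LSet_bounds (sSup_LSet_mem hs)).1
  have hMeq : 2 * sSup (LSet A) = A.card := by omega
  have hm1 : sInf (LSet A) ≤ ld.card := Nat.sInf_le hkd
  have hm2 : A.card + DavC G * A.count 0 ≤ DavC G * sInf (LSet A) + A.count 0 :=
    (mem_LSet_bounds (sInf_LSet_mem hs)).2
  have hmeq : DavC G * sInf (LSet A) = A.card := by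
    have h3 : DavC G * sInf (LSet A) ≤ DavC G * ld.card :=
      Nat.mul_le_mul_left _ hm1
    omega
  omega

/-- Forward direction, requires D ≥ 3. -/
lemma char_forward (hD : 3 ≤ DavC G) {A : Multiset G} (hA : A ≠ 0) (hs : A.sum = 0)
    (hrho : rhoSet (LSet A) = (DavC G : ℚ) / 2) :
    A ∈ MnSet G 2 ∧ A ∈ MnSet G (DavC G) := by
  rw [rho_eq_iff hA hs] at hrho
  set M := sSup (LSet A) with hMdef
  set m := sInf (LSet A) with hmdef
  have hMmem := sSup_LSet_mem hs
  have hmmem := sInf_LSet_mem hs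
  have hM2 : 2 * M ≤ A.card + A.count 0 := (mem_LSet_bounds hMmem).1
  have hm2 : A.card + DavC G * A.count 0 ≤ DavC G * m + A.count 0 :=
    (mem_LSet_bounds hmmem).2
  have ht : A.count 0 = 0 := by nlinarith
  have haM : A.card = 2 * M := by omega
  have ham : A.card = DavC G * m := by omega
  obtain ⟨lM, hlMc, hlM, hlMs⟩ := hMmem
  obtain ⟨lm, hlmc, hlm, hlms⟩ := hmmem
  constructor
  · refine ⟨lM, fun U hU => ⟨hlM U hU, ?_⟩, hlMs⟩
    rcases factor_tight2 hlM (by rw [hlMs, hlMc]; omega) U hU with rfl | h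
    · exfalso
      have : (0:G) ∈ A := by
        rw [← hlMs]
        exact mem_sum_of_mem hU (by simp)
      rw [← Multiset.count_pos] at this
      omega
    · exact h
  · refine ⟨lm, fun U hU => ⟨hlm U hU, ?_⟩, hlms⟩
    rcases factor_tightD hlm (by rw [hlms, hlmc, ht]; simpa using ham) U hU with rfl | h
    · exfalso
      have : (0:G) ∈ A := by
        rw [← hlms]
        exact mem_sum_of_mem hU (by simp)
      rw [← Multiset.count_pos] at this
      omega
    · exact h

/-- small D: all factorization lengths are equal. -/
lemma length_det (hD : DavC G ≤ 2) {A : Multiset G} {k : ℕ} (hk : k ∈ LSet A) :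
    2 * k = A.card + A.count 0 := by
  have h1 := (mem_LSet_bounds hk).1
  have h2 := (mem_LSet_bounds hk).2
  have h3 : A.count 0 ≤ A.card := Multiset.count_le_card 0 A
  have hD1 := one_le_D G
  interval_cases h : DavC G <;> omega

end E


section F
variable (G : Type*) [AddCommGroup G] [Fintype G]

/-- multisets of fixed card over a fintype form a finite set -/
lemma finite_card_eq (n : ℕ) : {U : Multiset G | U.card = n}.Finite := by
  induction n with
  | zero =>
    have : {U : Multiset G | U.card = 0} = {0} := by
      ext U; simp [Multiset.card_eq_zero]
    rw [this]; exact Set.finite_singleton 0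
  | succ n ih =>
    have hsub : {U : Multiset G | U.card = n + 1} ⊆
        ⋃ a : G, (fun V => a ::ₘ V) '' {U : Multiset G | U.card = n} := by
      intro U hU
      have : U ≠ 0 := by
        intro h; rw [h] at hU; simp at hU
      obtain ⟨a, ha⟩ := Multiset.exists_mem_of_ne_zero this
      obtain ⟨V, rfl⟩ := Multiset.exists_cons_of_mem ha
      simp only [Set.mem_iUnion, Set.mem_image, Set.mem_setOf_eq]
      refine ⟨a, V, ?_, rfl⟩
      have := hU
      simp only [Set.mem_setOf_eq, Multiset.card_cons] at this
      omega
    exact Set.Finite.subset (Set.finite_iUnion (fun a => ih.image _)) hsub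

lemma finite_minZS_card (n : ℕ) : {U : Multiset G | IsMinZS U ∧ U.card = n}.Finite :=
  (finite_card_eq G n).subset (fun U hU => hU.2)

noncomputable def Fn (n : ℕ) : Finset (Multiset G) := (finite_minZS_card G n).toFinset

abbrev Idx := (↥(Fn G 2)) ⊕ (↥(Fn G (DavC G)))

noncomputable def sigL (x : Idx G → ℕ) : Multiset G :=
  ∑ i : ↥(Fn G 2), x (Sum.inl i) • (i : Multiset G)

noncomputable def sigR (x : Idx G → ℕ) : Multiset G :=
  ∑ j : ↥(Fn G (DavC G)), x (Sum.inr j) • (j : Multiset G)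

def Tset : Set (Idx G → ℕ) := {x | sigL G x = sigR G x}

def cardHom : Multiset G →+ ℕ where
  toFun := Multiset.card
  map_zero' := rfl
  map_add' := Multiset.card_add

variable {G}

lemma sigL_add (x y : Idx G → ℕ) : sigL G (x + y) = sigL G x + sigL G y := by
  rw [sigL, sigL, sigL, ← Finset.sum_add_distrib]
  congr 1; funext i; rw [Pi.add_apply, add_smul]

lemma sigR_add (x y : Idx G → ℕ) : sigR G (x + y) = sigR G x + sigR G y := by
  rw [sigR, sigR, sigR, ← Finset.sum_add_distrib]
  congr 1; funext i; rw [Pi.add_apply, add_smul]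

lemma sigL_zero : sigL G 0 = 0 := by simp [sigL]

lemma card_sigL (x : Idx G → ℕ) :
    (sigL G x).card = ∑ i : ↥(Fn G 2), x (Sum.inl i) * 2 := by
  rw [sigL]
  change (cardHom G) _ = _
  rw [map_sum]
  congr 1; funext i
  have h2 : Multiset.card (i : Multiset G) = 2 :=
    ((finite_minZS_card G 2).mem_toFinset.1 i.2).2
  show Multiset.card (x (Sum.inl i) • (i : Multiset G)) = _
  rw [Multiset.card_nsmul, h2]

lemma card_sigR (x : Idx G → ℕ) :
    (sigR G x).card = ∑ j : ↥(Fn G (DavC G)), x (Sum.inr j) * DavC G := by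
  rw [sigR]
  change (cardHom G) _ = _
  rw [map_sum]
  congr 1; funext j
  have h2 : Multiset.card (j : Multiset G) = DavC G :=
    ((finite_minZS_card G (DavC G)).mem_toFinset.1 j.2).2
  show Multiset.card (x (Sum.inr j) • (j : Multiset G)) = _
  rw [Multiset.card_nsmul, h2]

lemma sigL_ne_zero {x : Idx G → ℕ} (hx : x ∈ Tset G) (hne : x ≠ 0) : sigL G x ≠ 0 := by
  have hpos : ∃ i, 0 < x i := by
    by_contra h
    push_neg at h
    exact hne (funext fun i => Nat.le_zero.1 (h i))
  obtain ⟨i, hi⟩ := hpos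
  have hD := one_le_D G
  intro h0
  have hR : sigR G x = 0 := by rw [← hx]; exact h0
  have hcL : (sigL G x).card = 0 := by rw [h0]; simp
  have hcR : (sigR G x).card = 0 := by rw [hR]; simp
  rcases i with i | j
  · rw [card_sigL] at hcL
    have : x (Sum.inl i) * 2 ≤ 0 := hcL ▸ Finset.single_le_sum
      (f := fun i => x (Sum.inl i) * 2) (fun _ _ => Nat.zero_le _) (Finset.mem_univ i)
    omega
  · rw [card_sigR] at hcR
    have : x (Sum.inr j) * DavC G ≤ 0 := hcR ▸ Finset.single_le_sum
      (f := fun j => x (Sum.inr j) * DavC G) (fun _ _ => Nat.zero_le _) (Finset.mem_univ j)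
    nlinarith

lemma Tset_sub {x y : Idx G → ℕ} (hx : x ∈ Tset G) (hy : y ∈ Tset G) (hle : y ≤ x) :
    x - y ∈ Tset G := by
  have hxy : (x - y) + y = x := tsub_add_cancel_of_le hle
  have hL : sigL G (x - y) + sigL G y = sigL G x := by rw [← sigL_add, hxy]
  have hR : sigR G (x - y) + sigR G y = sigR G x := by rw [← sigR_add, hxy]
  have : sigL G (x - y) + sigL G y = sigR G (x - y) + sigL G y := by
    rw [hL, hx, ← hR, hy]
  exact add_right_cancel this

lemma count_sum_nsmul [DecidableEq (Multiset G)] (l : Multiset (Multiset G)) (F : Finset (Multiset G))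
    (h : ∀ U ∈ l, U ∈ F) : ∑ U ∈ F, l.count U • U = l.sum := by
  classical
  induction l using Multiset.induction_on with
  | empty => simp
  | cons a l ih =>
    have haF : a ∈ F := h a (Multiset.mem_cons_self a l)
    have hl : ∀ U ∈ l, U ∈ F := fun U hU => h U (Multiset.mem_cons_of_mem hU)
    have step : ∀ U ∈ F, Multiset.count U (a ::ₘ l) • U
        = Multiset.count U l • U + (if U = a then U else 0) := by
      intro U _
      rw [Multiset.count_cons]
      split <;> simp [add_smul]
    rw [Finset.sum_congr rfl step, Finset.sum_add_distrib, ih hl,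
      Finset.sum_ite_eq' F a (fun U => U), if_pos haF, Multiset.sum_cons, add_comm]

lemma exists_x_of_mem_inter {A : Multiset G} (h2 : A ∈ MnSet G 2)
    (hd : A ∈ MnSet G (DavC G)) : ∃ x ∈ Tset G, sigL G x = A := by
  classical
  obtain ⟨l2, hl2, hl2s⟩ := h2
  obtain ⟨ld, hld, hlds⟩ := hd
  set c : ↥(Fn G 2) → ℕ := fun i => l2.count ↑i with hc
  set d : ↥(Fn G (DavC G)) → ℕ := fun j => ld.count ↑j with hd'
  have hL : sigL G (Sum.elim c d) = ∑ U ∈ Fn G 2, l2.count U • U := by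
    rw [sigL]
    exact Finset.sum_coe_sort (Fn G 2) (fun U => l2.count U • U)
  have hR : sigR G (Sum.elim c d) = ∑ U ∈ Fn G (DavC G), ld.count U • U := by
    rw [sigR]
    exact Finset.sum_coe_sort (Fn G (DavC G)) (fun U => ld.count U • U)
  have h2s : (∑ U ∈ Fn G 2, l2.count U • U) = A := by
    exact (count_sum_nsmul l2 _ (fun U hU =>
      (finite_minZS_card G 2).mem_toFinset.2 ⟨(hl2 U hU).1, (hl2 U hU).2⟩)).trans hl2s
  have hds : (∑ U ∈ Fn G (DavC G), ld.count U • U) = A := by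
    exact (count_sum_nsmul ld _ (fun U hU =>
      (finite_minZS_card G (DavC G)).mem_toFinset.2 ⟨(hld U hU).1, (hld U hU).2⟩)).trans hlds
  refine ⟨Sum.elim c d, ?_, by rw [hL, h2s]⟩
  show sigL G (Sum.elim c d) = sigR G (Sum.elim c d)
  rw [hL, hR, h2s, hds]

lemma mem_inter_of_x {x : Idx G → ℕ} (hx : x ∈ Tset G) :
    sigL G x ∈ MnSet G 2 ∧ sigL G x ∈ MnSet G (DavC G) := by
  classical
  constructor
  · refine ⟨∑ i : ↥(Fn G 2), Multiset.replicate (x (Sum.inl i)) (↑i : Multiset G),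
      ?_, ?_⟩
    · intro U hU
      rw [Multiset.mem_sum] at hU
      obtain ⟨i, _, hUi⟩ := hU
      rw [Multiset.eq_of_mem_replicate hUi]
      exact (finite_minZS_card G 2).mem_toFinset.1 i.2
    · change Multiset.sumAddMonoidHom _ = _
      rw [map_sum, sigL]
      congr 1; funext i
      show (Multiset.replicate (x (Sum.inl i)) (↑i : Multiset G)).sum = _
      rw [Multiset.sum_replicate]
  · refine ⟨∑ j : ↥(Fn G (DavC G)), Multiset.replicate (x (Sum.inr j)) (↑j : Multiset G),
      ?_, ?_⟩
    · intro U hU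
      rw [Multiset.mem_sum] at hU
      obtain ⟨j, _, hUj⟩ := hU
      rw [Multiset.eq_of_mem_replicate hUj]
      exact (finite_minZS_card G (DavC G)).mem_toFinset.1 j.2
    · change Multiset.sumAddMonoidHom _ = _
      rw [map_sum, hx, sigR]
      congr 1; funext j
      show (Multiset.replicate (x (Sum.inr j)) (↑j : Multiset G)).sum = _
      rw [Multiset.sum_replicate]

def TminSet : Set (Idx G → ℕ) :=
  {x | x ∈ Tset G ∧ x ≠ 0 ∧ ∀ y ∈ Tset G, y ≤ x → y ≠ 0 → y = x}

lemma Tmin_finite : (TminSet (G := G)).Finite := by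
  have hanti : IsAntichain (· ≤ ·) (TminSet (G := G)) := by
    intro a ha b hb hne hle
    exact hne (hb.2.2 a ha.1 hle ha.2.1)
  exact hanti.finite_of_partiallyWellOrderedOn
    (Set.isPWO_of_wellQuasiOrderedLE
      (TminSet (G := G)))

lemma exists_min_le {x : Idx G → ℕ} (hx : x ∈ Tset G) (hne : x ≠ 0) :
    ∃ y ∈ TminSet (G := G), y ≤ x := by
  classical
  set s : Set ℕ := {n | ∃ y, y ∈ Tset G ∧ y ≤ x ∧ y ≠ 0 ∧ (∑ i, y i) = n} with hs
  have hsne : s.Nonempty := ⟨∑ i, x i, x, hx, le_rfl, hne, rfl⟩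
  obtain ⟨y, hyT, hyx, hy0, hysum⟩ := Nat.sInf_mem hsne
  refine ⟨y, ⟨hyT, hy0, ?_⟩, hyx⟩
  intro z hzT hzy hz0
  have hzs : (∑ i, z i) ∈ s := ⟨z, hzT, hzy.trans hyx, hz0, rfl⟩
  have h1 := Nat.sInf_le hzs
  have hnolt : ∀ i, ¬ z i < y i := by
    intro i hi
    have := Finset.sum_lt_sum (fun j _ => hzy j) ⟨i, Finset.mem_univ i, hi⟩
    omega
  funext i
  exact le_antisymm (hzy i) (not_lt.1 (hnolt i))

lemma inter_gen : ∃ S : Finset (Multiset G),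
    (S : Set (Multiset G)) ⊆ (MnSet G 2 ∩ MnSet G (DavC G)) ∧
    ∀ A ∈ MnSet G 2 ∩ MnSet G (DavC G),
      A ∈ AddSubmonoid.closure (S : Set (Multiset G)) := by
  classical
  refine ⟨(Tmin_finite (G := G)).toFinset.image (sigL G), ?_, ?_⟩
  · intro B hB
    simp only [Finset.coe_image, Set.mem_image, Finset.mem_coe,
      Set.Finite.mem_toFinset] at hB
    obtain ⟨y, hy, rfl⟩ := hB
    exact mem_inter_of_x hy.1
  · suffices h : ∀ n, ∀ A : Multiset G, A.card ≤ n →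
        A ∈ MnSet G 2 ∩ MnSet G (DavC G) →
        A ∈ AddSubmonoid.closure
          (((Tmin_finite (G := G)).toFinset.image (sigL G) : Finset (Multiset G)) :
            Set (Multiset G)) from
      fun A hA => h A.card A le_rfl hA
    intro n
    induction n with
    | zero =>
      intro A hc _
      have : A = 0 := by rwa [← Multiset.card_eq_zero, ← Nat.le_zero]
      rw [this]
      exact zero_mem _
    | succ n ih =>
      intro A hc hA
      obtain ⟨x, hxT, hxA⟩ := exists_x_of_mem_inter hA.1 hA.2
      rcases eq_or_ne x 0 with rfl | hx0
      · rw [← hxA, sigL_zero]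
        exact zero_mem _
      obtain ⟨y, hyMin, hyx⟩ := exists_min_le hxT hx0
      have hyT : y ∈ Tset G := hyMin.1
      have hsub : x - y ∈ Tset G := Tset_sub hxT hyT hyx
      have hdecomp : sigL G (x - y) + sigL G y = A := by
        rw [← sigL_add, tsub_add_cancel_of_le hyx, hxA]
      have hBne : sigL G y ≠ 0 := sigL_ne_zero hyT hyMin.2.1
      have hCcard : (sigL G (x - y)).card ≤ n := by
        have h1 : (sigL G (x - y)).card + (sigL G y).card = A.card := by
          rw [← Multiset.card_add, hdecomp]
        have h2 : 0 < (sigL G y).card := Multiset.card_pos.2 hBne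
        omega
      have hC := mem_inter_of_x hsub
      have hCmem := ih _ hCcard ⟨hC.1, hC.2⟩
      have hBmem : sigL G y ∈ AddSubmonoid.closure
          (((Tmin_finite (G := G)).toFinset.image (sigL G) : Finset (Multiset G)) :
            Set (Multiset G)) := by
        apply AddSubmonoid.subset_closure
        simp only [Finset.coe_image, Set.mem_image, Finset.mem_coe,
          Set.Finite.mem_toFinset]
        exact ⟨y, hyMin, rfl⟩
      rw [← hdecomp]
      exact add_mem hCmem hBmem

end F


section G1
variable {G : Type*} [AddCommGroup G] [DecidableEq G] [Fintype G]

lemma MnSet_zero (n : ℕ) : (0 : Multiset G) ∈ MnSet G n := ⟨0, by simp, by simp⟩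

lemma MnSet_add {n : ℕ} {A B : Multiset G} (hA : A ∈ MnSet G n) (hB : B ∈ MnSet G n) :
    A + B ∈ MnSet G n := by
  obtain ⟨l1, hl1, rfl⟩ := hA
  obtain ⟨l2, hl2, rfl⟩ := hB
  exact ⟨l1 + l2, fun U hU => (Multiset.mem_add.1 hU).elim (hl1 U) (hl2 U),
    Multiset.sum_add l1 l2⟩

lemma Brho_eq_big (hD : 3 ≤ DavC G) :
    Brho G = MnSet G 2 ∩ MnSet G (DavC G) := by
  ext A
  constructor
  · rintro ⟨hs, hA⟩
    rcases eq_or_ne A 0 with rfl | hA0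
    · exact ⟨MnSet_zero 2, MnSet_zero _⟩
    · rcases hA with rfl | hrho
      · exact absurd rfl hA0
      · exact char_forward hD hA0 hs hrho
  · rintro ⟨h2, hd⟩
    refine ⟨MnSet_sum_zero h2, ?_⟩
    rcases eq_or_ne A 0 with rfl | hA0
    · exact Or.inl rfl
    · exact Or.inr (char_backward (by omega) hA0 h2 hd)

lemma Brho_eq_two (hD : DavC G = 2) : Brho G = {A : Multiset G | A.sum = 0} := by
  ext A
  constructor
  · exact fun h => h.1
  · intro hs
    refine ⟨hs, ?_⟩
    rcases eq_or_ne A 0 with rfl | hA0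
    · exact Or.inl rfl
    · refine Or.inr ((rho_eq_iff hA0 hs).2 ?_)
      have h1 := length_det (le_of_eq hD) (sSup_LSet_mem hs)
      have h2 := length_det (le_of_eq hD) (sInf_LSet_mem hs)
      rw [hD]
      omega

lemma Brho_eq_one (hD : DavC G = 1) : Brho G = {0} := by
  ext A
  constructor
  · rintro ⟨hs, rfl | hrho⟩
    · rfl
    · rcases eq_or_ne A 0 with rfl | hA0
      · rfl
      · exfalso
        have h := (rho_eq_iff hA0 hs).1 hrho
        rw [hD] at h
        have hm1 : 1 ≤ sInf (LSet A) := mem_LSet_pos hA0 (sInf_LSet_mem hs)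
        have hmM : sInf (LSet A) ≤ sSup (LSet A) := Nat.sInf_le (sSup_LSet_mem hs)
        omega
  · rintro rfl
    exact ⟨by simp, Or.inl rfl⟩

lemma finite_atoms_of_two (hD : DavC G = 2) : {U : Multiset G | IsMinZS U}.Finite := by
  apply Set.Finite.subset ((finite_card_eq G 1).union (finite_card_eq G 2))
  intro U hU
  have h1 := hU.card_pos
  have h2 := hU.card_le_D
  rw [hD] at h2
  rcases Nat.lt_or_ge U.card 2 with h | h
  · exact Or.inl (show U.card = 1 by omega)
  · exact Or.inr (show U.card = 2 by omega)

end G1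

theorem stmt3 {G : Type*} [AddCommGroup G] [Fintype G] :
    (0 : Multiset G) ∈ Brho G ∧
    (∀ A ∈ Brho G, ∀ B ∈ Brho G, A + B ∈ Brho G) ∧
    ∃ S : Finset (Multiset G), (S : Set (Multiset G)) ⊆ Brho G ∧
      Brho G ⊆ (AddSubmonoid.closure (S : Set (Multiset G)) : Set (Multiset G)) := by
  classical
  refine ⟨⟨by simp, Or.inl rfl⟩, ?_, ?_⟩
  · intro A hA B hB
    have hD := one_le_D G
    rcases Nat.lt_or_ge (DavC G) 3 with h3 | h3
    · rcases Nat.lt_or_ge (DavC G) 2 with h2 | h2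
      · have h1 : DavC G = 1 := by omega
        rw [Brho_eq_one h1] at *
        rw [hA, hB]
        simp
      · have h2' : DavC G = 2 := by omega
        rw [Brho_eq_two h2'] at *
        simp only [Set.mem_setOf_eq, Multiset.sum_add] at *
        rw [hA, hB, add_zero]
    · rw [Brho_eq_big h3] at *
      exact ⟨MnSet_add hA.1 hB.1, MnSet_add hA.2 hB.2⟩
  · have hD := one_le_D G
    rcases Nat.lt_or_ge (DavC G) 3 with h3 | h3
    · rcases Nat.lt_or_ge (DavC G) 2 with h2 | h2
      · have h1 : DavC G = 1 := by omega
        refine ⟨{0}, ?_, ?_⟩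
        · intro x hx
          simp only [Finset.coe_singleton, Set.mem_singleton_iff] at hx
          rw [hx]
          exact ⟨by simp, Or.inl rfl⟩
        · rw [Brho_eq_one h1]
          rintro A rfl
          exact zero_mem _
      · have h2' : DavC G = 2 := by omega
        refine ⟨(finite_atoms_of_two h2').toFinset, ?_, ?_⟩
        · intro U hU
          rw [Finset.mem_coe, Set.Finite.mem_toFinset] at hU
          rw [Brho_eq_two h2']
          exact hU.2.1
        · rw [Brho_eq_two h2']
          intro A hs
          obtain ⟨l, hl, rfl⟩ := exists_factorization A hs
          exact AddSubmonoid.multiset_sum_mem _ l (fun U hU =>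
            AddSubmonoid.subset_closure (by
              simp only [Finset.mem_coe, Set.Finite.mem_toFinset]
              exact hl U hU))
    · obtain ⟨S, hS1, hS2⟩ := inter_gen (G := G)
      refine ⟨S, ?_, ?_⟩
      · rw [Brho_eq_big h3]
        exact hS1
      · rw [Brho_eq_big h3]
        exact hS2
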